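/- arXiv:1210.3332 — 3 statements merged into one kernel-verified Lean document; each statement's English description precedes it below -/
import Mathlib

section
/- Let E, F be Banach spaces, P : E → F a continuous n-homogeneous polynomial with symmetric n-linear form P̌, μ a regular Borel probability measure on (B_{E'}, w*), 0 < p < ∞, and x, y ∈ E. Suppose that for each k = 1,…,n there is a constant C_k > 0 such that ‖(n!/(n−k)!) P̌(y^{n−k}, zᵏ)‖ ≤ C_k (∫_{B_{E'}} |φ(z)|^p dμ(φ))^{k/p} for all z ∈ E. If ∫_{B_{E'}} |φ(x − y)|^p dμ(φ) = 0, then P(x) = P(y). -/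
open MeasureTheory

/-- If `μ` is a Pietsch measure for every derivative `d̂ᵏP(y)` of an `n`-homogeneous
polynomial `P`, and `∫ |φ(x−y)|^p dμ = 0`, then `P(x) = P(y)`. -/
theorem stmt_10 (n : ℕ)
    (E : Type*) [NormedAddCommGroup E] [NormedSpace ℝ E] [CompleteSpace E]
    (F : Type*) [NormedAddCommGroup F] [NormedSpace ℝ F] [CompleteSpace F]
    [MeasurableSpace (WeakDual ℝ E)] [BorelSpace (WeakDual ℝ E)]
    (μ : Measure {φ : WeakDual ℝ E // ‖WeakDual.toStrongDual φ‖ ≤ 1})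
    [IsProbabilityMeasure μ] (hreg : μ.Regular)
    (p : ℝ) (hp : 0 < p)
    (P : E → F) (Pc : ContinuousMultilinearMap ℝ (fun _ : Fin n => E) F)
    (hPsym : ∀ σ : Equiv.Perm (Fin n), ∀ m, Pc (fun i => m (σ i)) = Pc m)
    (hP : ∀ z, P z = Pc (fun _ => z))
    (x y : E) (C : ℕ → ℝ) (hCpos : ∀ k, 1 ≤ k → k ≤ n → 0 < C k)
    (hdom : ∀ k, 1 ≤ k → k ≤ n → ∀ z : E,
      ‖((n.factorial : ℝ) / ((n - k).factorial : ℝ)) •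
          Pc (fun i : Fin n => if (i : ℕ) < n - k then y else z)‖ ≤
        C k * (∫ φ, ‖(φ : {φ : WeakDual ℝ E //
          ‖WeakDual.toStrongDual φ‖ ≤ 1}).1 z‖ ^ p ∂μ) ^ ((k : ℝ) / p))
    (hnull : (∫ φ, ‖(φ : {φ : WeakDual ℝ E //
      ‖WeakDual.toStrongDual φ‖ ≤ 1}).1 (x - y)‖ ^ p ∂μ) = 0) :
    P x = P y := by
  classical
  set z := x - y with hz
  -- Step 1: each "derivative" term vanishes
  have hterm : ∀ k, 1 ≤ k → k ≤ n →
      Pc (fun i : Fin n => if (i : ℕ) < n - k then y else z) = 0 := by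
    intro k hk1 hkn
    have h := hdom k hk1 hkn z
    have hkp : (0:ℝ) < (k : ℝ) / p := by
      have : (0:ℝ) < (k:ℝ) := by exact_mod_cast hk1
      positivity
    rw [hnull, Real.zero_rpow hkp.ne', mul_zero] at h
    have h0 : ((n.factorial : ℝ) / ((n - k).factorial : ℝ)) •
        Pc (fun i : Fin n => if (i : ℕ) < n - k then y else z) = 0 :=
      norm_le_zero_iff.mp h
    have hc : ((n.factorial : ℝ) / ((n - k).factorial : ℝ)) ≠ 0 := by
      have h1 : (0:ℝ) < (n.factorial : ℝ) := by exact_mod_cast n.factorial_pos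
      have h2 : (0:ℝ) < ((n - k).factorial : ℝ) := by exact_mod_cast (n - k).factorial_pos
      positivity
    rcases smul_eq_zero.mp h0 with h | h
    · exact absurd h hc
    · exact h
  -- Step 2: binomial expansion
  have hx : (fun _ : Fin n => x) = (fun _ : Fin n => z) + (fun _ : Fin n => y) := by
    funext i
    simp [hz]
  rw [hP, hP, hx, Pc.map_add_univ]
  -- Step 3: all terms except s = ∅ vanish
  rw [Finset.sum_eq_single (∅ : Finset (Fin n))]
  · simp
  · intro s _ hsne
    set k := s.card with hk
    have hk1 : 1 ≤ k := Finset.card_pos.mpr (Finset.nonempty_iff_ne_empty.mpr hsne)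
    have hkn : k ≤ n := by
      simpa using Finset.card_le_univ s
    -- build a permutation mapping s to the "tail" positions
    have hcard : (Finset.univ.filter fun i : Fin n => ¬ ((i:ℕ) < n - k)).card = k := by
      have h1 : (Finset.univ.filter fun i : Fin n => ((i:ℕ) < n - k)).card = n - k := by
        have hlt : n - k < n := Nat.sub_lt (lt_of_lt_of_le hk1 hkn) hk1
        have : (Finset.univ.filter fun i : Fin n => ((i:ℕ) < n - k))
            = Finset.Iio (⟨n - k, hlt⟩ : Fin n) := by
          ext i; simp [Fin.lt_iff_val_lt_val]
        rw [this, Fin.card_Iio]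
      have h2 := Finset.card_filter_add_card_filter_not
        (s := (Finset.univ : Finset (Fin n))) (p := fun i : Fin n => ((i:ℕ) < n - k))
      simp only [Finset.card_univ, Fintype.card_fin] at h2
      omega
    have e0 : ↥s ≃ ↥(Finset.univ.filter fun i : Fin n => ¬ ((i:ℕ) < n - k)) :=
      Finset.equivOfCardEq (by rw [hcard])
    have e : {i : Fin n // i ∈ s} ≃ {i : Fin n // ¬ ((i:ℕ) < n - k)} :=
      e0.trans (Equiv.subtypeEquivRight (fun i => by simp))
    set σ := e.extendSubtype with hσ
    have heq : (fun i => (fun j : Fin n => if (j:ℕ) < n - k then y else z) (σ i))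
        = s.piecewise (fun _ => z) (fun _ => y) := by
      funext i
      by_cases hi : i ∈ s
      · have h := e.extendSubtype_mem i hi
        rw [← hσ] at h
        simp [Finset.piecewise, hi, h]
      · have h := e.extendSubtype_not_mem i hi
        push_neg at h
        rw [← hσ] at h
        simp [Finset.piecewise, hi, h]
    rw [← heq]
    exact (hPsym σ _).trans (hterm k hk1 hkn)
  · simp
end

section
/- Let E be a real or complex Banach space, μ a regular Borel probability measure on (B_{E'}, w*), n a positive integer, p ≥ n, and P : E → L_{p/n}(μ) the n-homogeneous polynomial P(x) = [φ ↦ φ(x)ⁿ]. Then the associated symmetric n-linear map is P̌(x₁,…,xₙ) = [φ ↦ φ(x₁)φ(x₂)⋯φ(xₙ)], and for every a ∈ E, k ∈ {1,…,n}, and x ∈ E: ‖d̂ᵏP(a)(x)‖_{L_{p/n}} ≤ (n!/(n−k)!) ‖a‖^{n−k} (∫_{B_{E'}} |φ(x)|^p dμ(φ))^{k/p}. In particular μ is a differential Pietsch measure for P. -/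
open MeasureTheory

/-- For the `n`-homogeneous polynomial `P(x) = [φ ↦ φ(x)ⁿ] ∈ L_{p/n}(μ)`, whose associated
symmetric `n`-linear map is `(x₁,…,xₙ) ↦ [φ ↦ φ(x₁)⋯φ(xₙ)]`, every derivative satisfies
`‖d̂ᵏP(a)(x)‖_{L_{p/n}} = (n!/(n−k)!)·‖[φ ↦ φ(a)^{n−k}φ(x)ᵏ]‖_{L_{p/n}}
  ≤ (n!/(n−k)!)‖a‖^{n−k}(∫|φ(x)|^p dμ)^{k/p}`,
so `μ` is a differential Pietsch measure for `P`. -/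
theorem stmt_15 (𝕜 : Type*) [RCLike 𝕜]
    (E : Type*) [NormedAddCommGroup E] [NormedSpace 𝕜 E] [CompleteSpace E]
    [MeasurableSpace (WeakDual 𝕜 E)] [BorelSpace (WeakDual 𝕜 E)]
    (μ : Measure {φ : WeakDual 𝕜 E // ‖WeakDual.toStrongDual φ‖ ≤ 1})
    [IsProbabilityMeasure μ] (hreg : μ.Regular)
    (n : ℕ) (hn : 1 ≤ n) (p : ℝ) (hp : (n : ℝ) ≤ p) :
    ∀ (a x : E) (k : ℕ), 1 ≤ k → k ≤ n →
      ((n.factorial : ℝ) / ((n - k).factorial : ℝ)) *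
          (∫ φ, ‖((φ : {φ : WeakDual 𝕜 E // ‖WeakDual.toStrongDual φ‖ ≤ 1}).1 a) ^ (n - k) *
            (φ.1 x) ^ k‖ ^ (p / n) ∂μ) ^ ((n : ℝ) / p) ≤
        ((n.factorial : ℝ) / ((n - k).factorial : ℝ)) * ‖a‖ ^ (n - k) *
          (∫ φ, ‖(φ : {φ : WeakDual 𝕜 E //
            ‖WeakDual.toStrongDual φ‖ ≤ 1}).1 x‖ ^ p ∂μ) ^ ((k : ℝ) / p) := by
  intro a x k hk1 hkn
  have hn0 : (0:ℝ) < n := by exact_mod_cast hn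
  have hp0 : (0:ℝ) < p := lt_of_lt_of_le hn0 hp
  set S := {φ : WeakDual 𝕜 E // ‖WeakDual.toStrongDual φ‖ ≤ 1}
  have contRpow : ∀ q : ℝ, 0 ≤ q → Continuous fun t : ℝ => t ^ q := fun q hq =>
    continuous_iff_continuousAt.2 fun t => Real.continuousAt_rpow_const t q (Or.inr hq)
  have hmeas : ∀ y : E, Measurable fun φ : S => ‖φ.1 y‖ := fun y =>
    ((WeakDual.eval_continuous y).measurable.comp measurable_subtype_coe).norm
  have hbd : ∀ (y : E) (φ : S), ‖φ.1 y‖ ≤ ‖y‖ := by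
    intro y φ
    calc ‖φ.1 y‖ = ‖(WeakDual.toStrongDual φ.1) y‖ := rfl
      _ ≤ ‖WeakDual.toStrongDual φ.1‖ * ‖y‖ := (WeakDual.toStrongDual φ.1).le_opNorm y
      _ ≤ 1 * ‖y‖ := by gcongr; exact φ.2
      _ = ‖y‖ := one_mul _
  have hxnn : ∀ φ : S, (0:ℝ) ≤ ‖φ.1 x‖ := fun φ => norm_nonneg _
  set h : S → ℝ := fun φ => ‖φ.1 x‖ ^ p with hh
  have hhnn : ∀ φ, 0 ≤ h φ := fun φ => Real.rpow_nonneg (norm_nonneg _) _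
  have hhbd : ∀ φ, h φ ≤ ‖x‖ ^ p := fun φ =>
    Real.rpow_le_rpow (norm_nonneg _) (hbd x φ) hp0.le
  have hhmeas : Measurable h := (contRpow p hp0.le).measurable.comp (hmeas x)
  have hhint : Integrable h μ := by
    refine (integrable_const (‖x‖ ^ p)).mono' hhmeas.aestronglyMeasurable ?_
    filter_upwards with φ
    rw [Real.norm_of_nonneg (hhnn φ)]
    exact hhbd φ
  have hC0 : 0 ≤ ∫ φ, h φ ∂μ := integral_nonneg hhnn
  have hkn' : (0:ℝ) < (k:ℝ)/n := by positivity
  have hkn1 : (k:ℝ)/n ≤ 1 := by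
    rw [div_le_one hn0]; exact_mod_cast hkn
  have hgi : Integrable (fun φ => h φ ^ ((k:ℝ)/n)) μ := by
    refine (integrable_const ((‖x‖ ^ p) ^ ((k:ℝ)/n))).mono'
      ((contRpow _ hkn'.le).measurable.comp hhmeas).aestronglyMeasurable ?_
    filter_upwards with φ
    rw [Real.norm_of_nonneg (Real.rpow_nonneg (hhnn φ) _)]
    exact Real.rpow_le_rpow (hhnn φ) (hhbd φ) hkn'.le
  have jensen : (∫ φ, h φ ^ ((k:ℝ)/n) ∂μ) ≤ (∫ φ, h φ ∂μ) ^ ((k:ℝ)/n) := by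
    have hcon : ConcaveOn ℝ (Set.Ici 0) fun t : ℝ => t ^ ((k:ℝ)/n) :=
      Real.concaveOn_rpow hkn'.le hkn1
    exact hcon.le_map_integral ((contRpow _ hkn'.le).continuousOn) isClosed_Ici
      (Filter.Eventually.of_forall fun φ => hhnn φ) hhint hgi
  have step1 : (∫ φ, ‖(φ : S).1 a ^ (n - k) * (φ.1 x) ^ k‖ ^ (p / n) ∂μ) ≤
      (‖a‖ ^ (n-k) : ℝ) ^ (p/n) * ∫ φ, h φ ^ ((k:ℝ)/n) ∂μ := by
    rw [← integral_const_mul]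
    refine integral_mono_of_nonneg (Filter.Eventually.of_forall fun φ =>
      Real.rpow_nonneg (norm_nonneg _) _) (hgi.const_mul _)
      (Filter.Eventually.of_forall fun φ => ?_)
    dsimp only
    have e1 : ‖(φ : S).1 a ^ (n - k) * (φ.1 x) ^ k‖ = ‖φ.1 a‖ ^ (n-k) * ‖φ.1 x‖ ^ k := by
      rw [norm_mul, norm_pow, norm_pow]
    have e2 : ((‖φ.1 x‖ ^ k : ℝ)) ^ (p/(n:ℝ)) = h φ ^ ((k:ℝ)/n) := by
      rw [hh, ← Real.rpow_natCast ‖φ.1 x‖ k, ← Real.rpow_mul (hxnn φ),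
        ← Real.rpow_mul (hxnn φ)]
      congr 1
      ring
    rw [e1, Real.mul_rpow (by positivity) (by positivity), e2]
    refine mul_le_mul_of_nonneg_right ?_ (Real.rpow_nonneg (hhnn φ) _)
    exact Real.rpow_le_rpow (by positivity)
      (pow_le_pow_left₀ (norm_nonneg _) (hbd a φ) _) (by positivity)
  have hI0 : 0 ≤ ∫ φ, ‖(φ : S).1 a ^ (n - k) * (φ.1 x) ^ k‖ ^ (p / n) ∂μ :=
    integral_nonneg fun φ => Real.rpow_nonneg (norm_nonneg _) _
  have hA : ((‖a‖ ^ (n-k) : ℝ) ^ (p/(n:ℝ))) ^ ((n:ℝ)/p) = ‖a‖ ^ (n-k) := by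
    rw [← Real.rpow_natCast ‖a‖ (n-k), ← Real.rpow_mul (norm_nonneg a),
      ← Real.rpow_mul (norm_nonneg a)]
    rw [show ((n-k:ℕ):ℝ) * (p/(n:ℝ)) * ((n:ℝ)/p) = ((n-k:ℕ):ℝ) by
      field_simp]
  have hB : ((∫ φ, h φ ∂μ) ^ ((k:ℝ)/n)) ^ ((n:ℝ)/p) = (∫ φ, h φ ∂μ) ^ ((k:ℝ)/p) := by
    rw [← Real.rpow_mul hC0]
    congr 1
    field_simp
  have step2 : (∫ φ, ‖(φ : S).1 a ^ (n - k) * (φ.1 x) ^ k‖ ^ (p / n) ∂μ) ^ ((n:ℝ)/p) ≤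
      ‖a‖ ^ (n-k) * (∫ φ, h φ ∂μ) ^ ((k:ℝ)/p) := by
    calc (∫ φ, ‖(φ : S).1 a ^ (n - k) * (φ.1 x) ^ k‖ ^ (p / n) ∂μ) ^ ((n:ℝ)/p)
        ≤ ((‖a‖ ^ (n-k) : ℝ) ^ (p/(n:ℝ)) * (∫ φ, h φ ∂μ) ^ ((k:ℝ)/n)) ^ ((n:ℝ)/p) := by
          refine Real.rpow_le_rpow hI0 (le_trans step1 ?_) (by positivity)
          exact mul_le_mul_of_nonneg_left jensen (Real.rpow_nonneg (by positivity) _)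
      _ = ‖a‖ ^ (n-k) * (∫ φ, h φ ∂μ) ^ ((k:ℝ)/p) := by
          rw [Real.mul_rpow (Real.rpow_nonneg (by positivity) _)
            (Real.rpow_nonneg hC0 _), hA, hB]
  have hfac : (0:ℝ) ≤ (n.factorial : ℝ) / ((n - k).factorial : ℝ) := by positivity
  calc ((n.factorial : ℝ) / ((n - k).factorial : ℝ)) *
      (∫ φ, ‖(φ : S).1 a ^ (n - k) * (φ.1 x) ^ k‖ ^ (p / n) ∂μ) ^ ((n:ℝ)/p)
      ≤ ((n.factorial : ℝ) / ((n - k).factorial : ℝ)) *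
        (‖a‖ ^ (n-k) * (∫ φ, h φ ∂μ) ^ ((k:ℝ)/p)) :=
        mul_le_mul_of_nonneg_left step2 hfac
    _ = ((n.factorial : ℝ) / ((n - k).factorial : ℝ)) * ‖a‖ ^ (n-k) *
        (∫ φ, ‖(φ : S).1 x‖ ^ p ∂μ) ^ ((k:ℝ)/p) := by rw [hh]; ring
end

section
/- Let E, G, F be Banach spaces, u : E → G a p-summing linear operator (p ≥ n ≥ 1), and Q : G → F a continuous n-homogeneous polynomial. Then P = Q ∘ u : E → F is a p-dominated n-homogeneous polynomial; explicitly, if μ is a Pietsch measure for u with constant C, then ‖P(x)‖ ≤ ‖Q‖ Cⁿ (∫_{B_{E'}} |φ(x)|^p dμ(φ))^{n/p} for all x ∈ E, so μ is a Pietsch measure for P. -/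
open MeasureTheory

/-- If `u : E → G` is `p`-summing with Pietsch measure `μ` and constant `C`, and
`Q : G → F` is a continuous `n`-homogeneous polynomial with `‖Q(z)‖ ≤ ‖Q‖·‖z‖ⁿ`, then
`P = Q ∘ u` is `p`-dominated: `‖P(x)‖ ≤ ‖Q‖·Cⁿ·(∫ |φ(x)|^p dμ)^{n/p}`, so `μ` is a
Pietsch measure for `P`. -/
theorem stmt_17 (n : ℕ) (hn : 1 ≤ n)
    (E : Type*) [NormedAddCommGroup E] [NormedSpace ℝ E] [CompleteSpace E]
    (G : Type*) [NormedAddCommGroup G] [NormedSpace ℝ G] [CompleteSpace G]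
    (F : Type*) [NormedAddCommGroup F] [NormedSpace ℝ F] [CompleteSpace F]
    [MeasurableSpace (WeakDual ℝ E)] [BorelSpace (WeakDual ℝ E)]
    (μ : Measure {φ : WeakDual ℝ E // ‖WeakDual.toStrongDual φ‖ ≤ 1})
    [IsProbabilityMeasure μ] (hreg : μ.Regular)
    (p : ℝ) (hp : (n : ℝ) ≤ p)
    (u : E →L[ℝ] G) (C : ℝ) (hC : 0 < C)
    (hPietsch : ∀ x : E, ‖u x‖ ≤ C * (∫ φ, ‖(φ : {φ : WeakDual ℝ E //
      ‖WeakDual.toStrongDual φ‖ ≤ 1}).1 x‖ ^ p ∂μ) ^ (1 / p))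
    (Q : G → F) (Qc : ContinuousMultilinearMap ℝ (fun _ : Fin n => G) F)
    (hQhom : ∀ z, Q z = Qc (fun _ => z))
    (MQ : ℝ) (hMQ : 0 ≤ MQ) (hQbound : ∀ z, ‖Q z‖ ≤ MQ * ‖z‖ ^ n) :
    ∀ x : E, ‖Q (u x)‖ ≤ MQ * C ^ n * (∫ φ, ‖(φ : {φ : WeakDual ℝ E //
      ‖WeakDual.toStrongDual φ‖ ≤ 1}).1 x‖ ^ p ∂μ) ^ ((n : ℝ) / p) := by
  intro x
  have hp0 : 0 < p := lt_of_lt_of_le (by exact_mod_cast Nat.lt_of_lt_of_le Nat.zero_lt_one hn : (0:ℝ) < n) hp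
  set I := ∫ φ, ‖(φ : {φ : WeakDual ℝ E // ‖WeakDual.toStrongDual φ‖ ≤ 1}).1 x‖ ^ p ∂μ with hI
  have hInn : 0 ≤ I := integral_nonneg fun φ => Real.rpow_nonneg (norm_nonneg _) p
  calc ‖Q (u x)‖ ≤ MQ * ‖u x‖ ^ n := hQbound _
    _ ≤ MQ * (C * I ^ (1/p)) ^ n := by
        gcongr
        exact hPietsch x
    _ = MQ * C ^ n * I ^ ((n:ℝ)/p) := by
        rw [mul_pow, ← Real.rpow_natCast (I ^ (1/p)) n, ← Real.rpow_mul hInn]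
        ring_nf
end
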